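/- Let w_0, …, w_n ∈ C^n have Property A, write w_j = x_j + i y_j with x_j, y_j ∈ R^n, and let u_j = (x_j, y_j) ∈ R^{2n} and v_j = (−y_j, x_j) ∈ R^{2n} be the associated real vectors. Then for any two index choices 0 ≤ j_1 < … < j_n ≤ n and 0 ≤ k_1 < … < k_n ≤ n, one has |det(u_{j_1}, …, u_{j_n}, v_{k_1}, …, v_{k_n})| = |det(w_{j_1}, …, w_{j_n})| · |det(w_{k_1}, …, w_{k_n})|, where the left-hand determinant is of the 2n×2n real matrix with the listed columns and the right-hand determinants are of n×n complex matrices with the listed columns. -/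

import Mathlib

/-- The first associated real vector `u = (x₁, …, xₙ, y₁, …, yₙ) ∈ ℝ²ⁿ`
of `w = x + iy ∈ ℂⁿ`. -/
def assocU {n : ℕ} (w : Fin n → ℂ) : Fin n ⊕ Fin n → ℝ :=
  Sum.elim (fun i => (w i).re) (fun i => (w i).im)

/-- The second associated real vector `v = (-y₁, …, -yₙ, x₁, …, xₙ) ∈ ℝ²ⁿ`
of `w = x + iy ∈ ℂⁿ`. -/
def assocV {n : ℕ} (w : Fin n → ℂ) : Fin n ⊕ Fin n → ℝ :=
  Sum.elim (fun i => -(w i).im) (fun i => (w i).re)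

/-- `w₀, …, wₙ ∈ ℂⁿ` have Property A: there are strictly positive reals
`r₀, …, rₙ` with `r₀ + ⋯ + rₙ = 1` and `r₀w₀ + ⋯ + rₙwₙ = 0`. -/
def PropertyA {n : ℕ} (w : Fin (n + 1) → Fin n → ℂ) : Prop :=
  ∃ r : Fin (n + 1) → ℝ, (∀ j, 0 < r j) ∧ (∑ j, r j = 1) ∧
    (∑ j, (r j : ℂ) • w j = 0)


open Matrix Complex

lemma det_realify {n : ℕ} (D : Matrix (Fin n) (Fin n) ℂ) :
    Matrix.det (Matrix.fromBlocks (D.map Complex.re) (-(D.map Complex.im))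
      (D.map Complex.im) (D.map Complex.re)) = Complex.normSq D.det := by
  set X : Matrix (Fin n) (Fin n) ℂ := (D.map Complex.re).map (Complex.ofReal) with hX
  set Y : Matrix (Fin n) (Fin n) ℂ := (D.map Complex.im).map (Complex.ofReal) with hY
  set Mr : Matrix (Fin n ⊕ Fin n) (Fin n ⊕ Fin n) ℝ :=
    Matrix.fromBlocks (D.map Complex.re) (-(D.map Complex.im))
      (D.map Complex.im) (D.map Complex.re) with hMr
  have hmap : Mr.map Complex.ofReal = Matrix.fromBlocks X (-Y) Y X := by
    ext i j
    rcases i with i | i <;> rcases j with j | j <;>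
      simp [Mr, X, Y, Matrix.fromBlocks, Matrix.map]
  set P : Matrix (Fin n ⊕ Fin n) (Fin n ⊕ Fin n) ℂ :=
    Matrix.fromBlocks 1 (Complex.I • 1) 0 1 with hP
  set Q : Matrix (Fin n ⊕ Fin n) (Fin n ⊕ Fin n) ℂ :=
    Matrix.fromBlocks 1 (-Complex.I • 1) 0 1 with hQ
  have hXY1 : X + Complex.I • Y = D := by
    ext i j
    simp [X, Y, Matrix.map]
    rw [mul_comm]
    exact Complex.re_add_im _
  have hXY2 : X - Complex.I • Y = D.map (starRingEnd ℂ) := by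
    ext i j
    simp [X, Y, Matrix.map, Complex.ext_iff]
  have e1 : P * (Mr.map Complex.ofReal) =
      Matrix.fromBlocks (X + Complex.I • Y) (-Y + Complex.I • X) Y X := by
    rw [hmap, hP, Matrix.fromBlocks_multiply]
    congr 1 <;> simp [Matrix.smul_mul]
  have hII : Complex.I • Complex.I • Y = -Y := by
    rw [smul_smul, Complex.I_mul_I, neg_one_smul]
  have e2 : Matrix.fromBlocks (X + Complex.I • Y) (-Y + Complex.I • X) Y X * Q =
      Matrix.fromBlocks D 0 Y (D.map (starRingEnd ℂ)) := by
    rw [hQ, Matrix.fromBlocks_multiply]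
    have g11 : (X + Complex.I • Y) * 1 + (-Y + Complex.I • X) * 0 = D := by
      simpa using hXY1
    have g12 : (X + Complex.I • Y) * (-Complex.I • 1) + (-Y + Complex.I • X) * 1 = 0 := by
      rw [mul_one, Matrix.mul_smul, mul_one, neg_smul, smul_add, hII]
      abel
    have g21 : Y * 1 + X * 0 = Y := by simp
    have g22 : Y * (-Complex.I • 1) + X * 1 = D.map (starRingEnd ℂ) := by
      rw [mul_one, Matrix.mul_smul, mul_one, neg_smul, ← hXY2]
      abel
    rw [g11, g12, g21, g22]
  have hdetP : P.det = 1 := by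
    rw [hP, Matrix.det_fromBlocks_zero₂₁]; simp
  have hdetQ : Q.det = 1 := by
    rw [hQ, Matrix.det_fromBlocks_zero₂₁]; simp
  have hdm : (Complex.ofReal Mr.det : ℂ) = (Mr.map Complex.ofReal).det := by
    have := RingHom.map_det Complex.ofRealHom Mr
    exact this
  have hconj : (D.map (starRingEnd ℂ)).det = (starRingEnd ℂ) D.det := by
    have := RingHom.map_det ((starRingEnd ℂ) : ℂ →+* ℂ) D
    simpa [RingHom.mapMatrix_apply] using this.symm
  have h1 : (Mr.det : ℂ) = D.det * (starRingEnd ℂ) D.det := by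
    have hmul : (P * (Mr.map Complex.ofReal) * Q).det =
        (Matrix.fromBlocks D 0 Y (D.map (starRingEnd ℂ))).det := by
      rw [e1, e2]
    rw [Matrix.det_mul, Matrix.det_mul, hdetP, hdetQ, one_mul, mul_one,
      Matrix.det_fromBlocks_zero₁₂, hconj] at hmul
    rw [← hdm] at hmul
    exact hmul
  have h2 : (Mr.det : ℂ) = ((Complex.normSq D.det : ℝ) : ℂ) := by
    rw [h1, Complex.mul_conj]
  exact_mod_cast h2

theorem stmt8' (n : ℕ) (w : Fin (n + 1) → Fin n → ℂ)
    (hA : ∃ r : Fin (n + 1) → ℝ, (∀ j, 0 < r j) ∧ (∑ j, r j = 1) ∧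
      (∑ j, (r j : ℂ) • w j = 0))
    (s t : Fin n → Fin (n + 1)) (hs : StrictMono s) (ht : StrictMono t) :
    |Matrix.det (Matrix.of fun (i c : Fin n ⊕ Fin n) =>
        Sum.elim (fun a => Sum.elim (fun i' => (w (s a) i').re) (fun i' => (w (s a) i').im) i)
          (fun b => Sum.elim (fun i' => -(w (t b) i').im) (fun i' => (w (t b) i').re) i) c)| =
      ‖Matrix.det (Matrix.of fun i a => w (s a) i)‖ *
        ‖Matrix.det (Matrix.of fun i a => w (t a) i)‖ := by
  obtain ⟨r, hrpos, -, hr0⟩ := hA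
  set M : Matrix (Fin n ⊕ Fin n) (Fin n ⊕ Fin n) ℝ := Matrix.of fun (i c : Fin n ⊕ Fin n) =>
        Sum.elim (fun a => Sum.elim (fun i' => (w (s a) i').re) (fun i' => (w (s a) i').im) i)
          (fun b => Sum.elim (fun i' => -(w (t b) i').im) (fun i' => (w (t b) i').re) i) c
    with hMdef
  have hsinj : Function.Injective s := hs.injective
  have hcard : ((Finset.univ.image s)ᶜ : Finset (Fin (n+1))).card = 1 := by
    rw [Finset.card_compl, Finset.card_image_of_injective _ hsinj]
    simp
  obtain ⟨p, hp⟩ := Finset.card_eq_one.mp hcard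
  have himg : (Finset.univ.image s) = ({p}ᶜ : Finset (Fin (n+1))) := by
    rw [← compl_compl (Finset.univ.image s), hp]
  have hmem : ∀ j : Fin (n+1), j ≠ p ↔ ∃ a, s a = j := by
    intro j
    constructor
    · intro hj
      have : j ∈ Finset.univ.image s := by
        rw [himg]; simpa using hj
      simpa using this
    · rintro ⟨a, rfl⟩ h
      have h2 : s a ∈ Finset.univ.image s := by simp
      rw [himg, h] at h2
      simp at h2
  have hsplit : ∀ f : Fin (n+1) → ℂ, (∑ j, f j) = f p + ∑ a, f (s a) := by
    intro f
    have h1 : ∑ a, f (s a) = ∑ j ∈ Finset.univ.image s, f j :=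
      (Finset.sum_image (fun a _ b _ h => hsinj h)).symm
    rw [h1, himg, ← Finset.sum_compl_add_sum ({p} : Finset (Fin (n+1))) f]
    simp [add_comm]
  set c : Fin (n+1) → Fin n → ℝ :=
    fun j a => if j = p then -(r (s a) / r p) else if s a = j then 1 else 0 with hc
  have hrp : (r p : ℂ) ≠ 0 := by exact_mod_cast (hrpos p).ne'
  have key : ∀ j i, w j i = ∑ a, (c j a : ℂ) * w (s a) i := by
    intro j i
    by_cases hj : j = p
    · rw [hj]
      have h0 : ∑ k, (r k : ℂ) * w k i = 0 := by
        have := congrFun hr0 i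
        simpa [Finset.sum_apply] using this
      rw [hsplit (fun k => (r k : ℂ) * w k i)] at h0
      have hsum : ∑ a, (r (s a) : ℂ) * w (s a) i = -((r p : ℂ) * w p i) := by
        linear_combination h0
      have hterm : ∀ a, ((c p a : ℝ) : ℂ) * w (s a) i =
          ((r p : ℂ))⁻¹ * (-((r (s a) : ℂ) * w (s a) i)) := by
        intro a
        simp only [hc, if_pos rfl]
        push_cast
        ring
      rw [Finset.sum_congr rfl fun a _ => hterm a, ← Finset.mul_sum,
        Finset.sum_neg_distrib, hsum, neg_neg, ← mul_assoc, inv_mul_cancel₀ hrp, one_mul]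
    · obtain ⟨a₀, rfl⟩ := (hmem j).mp hj
      have hne : s a₀ ≠ p := (hmem (s a₀)).mpr ⟨a₀, rfl⟩
      have hterm : ∀ a, ((c (s a₀) a : ℝ) : ℂ) * w (s a) i =
          if a = a₀ then w (s a) i else 0 := by
        intro a
        simp only [hc, if_neg hne, hsinj.eq_iff]
        split <;> simp
      rw [Finset.sum_congr rfl fun a _ => hterm a, Finset.sum_ite_eq' Finset.univ a₀]
      simp
  have keyRe : ∀ j i, (w j i).re = ∑ a, c j a * (w (s a) i).re := by
    intro j i
    rw [key j i, Complex.re_sum]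
    refine Finset.sum_congr rfl fun a _ => ?_
    simp [Complex.mul_re]
  have keyIm : ∀ j i, (w j i).im = ∑ a, c j a * (w (s a) i).im := by
    intro j i
    rw [key j i, Complex.im_sum]
    refine Finset.sum_congr rfl fun a _ => ?_
    simp [Complex.mul_im]
  set A : Matrix (Fin n) (Fin n) ℂ := Matrix.of fun i a => w (s a) i with hAdef
  set B : Matrix (Fin n) (Fin n) ℂ := Matrix.of fun i b => w (t b) i with hBdef
  set C : Matrix (Fin n) (Fin n) ℝ := Matrix.of fun a b => c (t b) a with hCdef
  have hMfac : M =
      Matrix.fromBlocks (A.map Complex.re) (-(A.map Complex.im))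
        (A.map Complex.im) (A.map Complex.re) *
      Matrix.fromBlocks (1 : Matrix (Fin n) (Fin n) ℝ) 0 0 C := by
    rw [Matrix.fromBlocks_multiply, hMdef]
    ext i j
    rcases i with i | i <;> rcases j with j | j
    · simp [Matrix.fromBlocks, A, Matrix.map]
    · simp only [Matrix.of_apply, Sum.elim_inl, Sum.elim_inr, Matrix.fromBlocks_apply₁₂,
        Matrix.add_apply, Matrix.mul_apply, Matrix.zero_apply, Matrix.neg_apply, Matrix.map_apply,
        Matrix.of_apply, mul_zero, Finset.sum_const_zero, zero_add, A, C]
      rw [keyIm (t j) i, ← Finset.sum_neg_distrib]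
      exact Finset.sum_congr rfl fun a _ => by ring
    · simp [Matrix.fromBlocks, A, Matrix.map]
    · simp only [Matrix.of_apply, Sum.elim_inr, Matrix.fromBlocks_apply₂₂,
        Matrix.add_apply, Matrix.mul_apply, Matrix.zero_apply, Matrix.map_apply,
        mul_zero, zero_mul, Finset.sum_const_zero, zero_add, A, C]
      rw [keyRe (t j) i]
      exact Finset.sum_congr rfl fun a _ => by ring
  have hBfac : B = A * C.map Complex.ofReal := by
    ext i b
    simp only [Matrix.mul_apply, Matrix.map_apply, Matrix.of_apply, A, B, C]
    rw [key (t b) i]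
    exact Finset.sum_congr rfl fun a _ => by ring
  have hCmapdet : (C.map Complex.ofReal).det = ((C.det : ℝ) : ℂ) := by
    have := RingHom.map_det Complex.ofRealHom C
    exact this.symm
  have hBdet : ‖B.det‖ = ‖A.det‖ * |C.det| := by
    rw [hBfac, Matrix.det_mul, hCmapdet, norm_mul, Complex.norm_real, Real.norm_eq_abs]
  have hMdet : |M.det| =
      Complex.normSq A.det * |C.det| := by
    rw [hMfac, Matrix.det_mul, det_realify, Matrix.det_fromBlocks_zero₂₁, Matrix.det_one, one_mul,
      abs_mul, _root_.abs_of_nonneg (Complex.normSq_nonneg _)]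
  rw [hMdet, hBdet, ← Complex.sq_norm]
  ring

/-- If `w₀, …, wₙ ∈ ℂⁿ` have Property A, then for any two strictly increasing index
choices `j₁ < ⋯ < jₙ` and `k₁ < ⋯ < kₙ`, the absolute value of the `2n × 2n` real
determinant with columns `u_{j₁}, …, u_{jₙ}, v_{k₁}, …, v_{kₙ}` equals the product
`|det(w_{j₁}, …, w_{jₙ})| ⋅ |det(w_{k₁}, …, w_{kₙ})|`. -/
theorem stmt8 (n : ℕ) (w : Fin (n + 1) → Fin n → ℂ) (hA : PropertyA w)
    (s t : Fin n → Fin (n + 1)) (hs : StrictMono s) (ht : StrictMono t) :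
    |Matrix.det (Matrix.of fun (i c : Fin n ⊕ Fin n) =>
        Sum.elim (fun a => assocU (w (s a)) i) (fun b => assocV (w (t b)) i) c)| =
      ‖Matrix.det (Matrix.of fun i a => w (s a) i)‖ *
        ‖Matrix.det (Matrix.of fun i a => w (t a) i)‖ := by
  exact stmt8' n w hA s t hs ht
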